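/- Let τ = (1+√5)/2 and s = √(τ+2). Let A be the real 3×3 matrix [[τ/s, −1/s, 0], [1/s, τ/s, 0], [0, 0, 1]] and let B be the rotation matrix [[1, 0, 0], [0, cos(2π/5), −sin(2π/5)], [0, sin(2π/5), cos(2π/5)]]. Then A·B·A⁻¹ = (1/2)·[[τ, τ−1, 1], [τ−1, 1, −τ], [−1, τ, τ−1]]. -/

import Mathlib

/-- The golden ratio `τ = (1 + √5)/2`. -/
noncomputable def τ : ℝ := (1 + Real.sqrt 5) / 2

/-- `s = √(τ + 2)`. -/
noncomputable def s : ℝ := Real.sqrt (τ + 2)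

/-- The change-of-basis matrix `A = [[τ/s, −1/s, 0], [1/s, τ/s, 0], [0, 0, 1]]`. -/
noncomputable def A : Matrix (Fin 3) (Fin 3) ℝ :=
  !![τ / s, -1 / s, 0; 1 / s, τ / s, 0; 0, 0, 1]

/-- The rotation by `2π/5` about the `x₀`-axis:
`B = [[1, 0, 0], [0, cos(2π/5), −sin(2π/5)], [0, sin(2π/5), cos(2π/5)]]`. -/
noncomputable def B : Matrix (Fin 3) (Fin 3) ℝ :=
  !![1, 0, 0;
     0, Real.cos (2 * Real.pi / 5), -Real.sin (2 * Real.pi / 5);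
     0, Real.sin (2 * Real.pi / 5), Real.cos (2 * Real.pi / 5)]

lemma sqrt5_sq : Real.sqrt 5 ^ 2 = 5 := Real.sq_sqrt (by norm_num)

lemma tau_sq : τ ^ 2 = τ + 1 := by
  unfold τ; have := sqrt5_sq; nlinarith [this]

lemma tau_pos : (0:ℝ) < τ := by
  unfold τ; positivity

lemma s_sq : s ^ 2 = τ + 2 := by
  unfold s
  exact Real.sq_sqrt (by nlinarith [tau_pos])

lemma s_pos : (0:ℝ) < s := by
  unfold s
  exact Real.sqrt_pos.mpr (by nlinarith [tau_pos])

lemma cos_eq : Real.cos (2 * Real.pi / 5) = (τ - 1) / 2 := by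
  have h : 2 * Real.pi / 5 = 2 * (Real.pi / 5) := by ring
  rw [h, Real.cos_two_mul, Real.cos_pi_div_five]
  unfold τ
  nlinarith [sqrt5_sq]

lemma sin_eq : Real.sin (2 * Real.pi / 5) = s / 2 := by
  have hπ := Real.pi_pos
  have h1 : Real.sin (2 * Real.pi / 5) ≥ 0 :=
    Real.sin_nonneg_of_nonneg_of_le_pi (by positivity) (by nlinarith)
  have h2 : Real.sin (2 * Real.pi / 5) ^ 2 = (s / 2) ^ 2 := by
    have := Real.sin_sq_add_cos_sq (2 * Real.pi / 5)
    rw [cos_eq] at this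
    have hs := s_sq
    have ht := tau_sq
    nlinarith [this, hs, ht]
  have h3 : (0:ℝ) ≤ s / 2 := by linarith [s_pos]
  nlinarith [h1, h2, h3]

/-- the matrix computation of Section 3 of the paper:
`A·B·A⁻¹ = (1/2)·[[τ, τ−1, 1], [τ−1, 1, −τ], [−1, τ, τ−1]]`. -/
theorem conjugate_rotation_eq_M :
    A * B * A⁻¹ = (1 / 2 : ℝ) • !![τ, τ - 1, 1; τ - 1, 1, -τ; -1, τ, τ - 1] := by
  have hs0 : s ≠ 0 := ne_of_gt s_pos
  have hτ := tau_sq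
  have hs2 := s_sq
  set M : Matrix (Fin 3) (Fin 3) ℝ :=
    (1 / 2 : ℝ) • !![τ, τ - 1, 1; τ - 1, 1, -τ; -1, τ, τ - 1] with hM
  have hdet : A.det ≠ 0 := by
    have : A.det = 1 := by
      simp [A, Matrix.det_fin_three]
      field_simp
      linear_combination hτ - hs2
    rw [this]; norm_num
  have hAB : A * B = M * A := by
    ext i j
    fin_cases i <;> fin_cases j <;>
      simp [A, B, hM, Matrix.mul_apply, Fin.sum_univ_three, cos_eq, sin_eq,
        Matrix.vecHead, Matrix.vecTail] <;>
      field_simp <;>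
      first
        | linear_combination (-s) * hτ
        | linear_combination 2 * s * hτ
        | linear_combination s * hτ
        | linear_combination hτ
        | linear_combination -hτ
        | linear_combination (-4 * s ^ 2) * hτ
        | linear_combination 2 * hs2 - 2 * hτ
        | linear_combination hs2 - hτ
        | ring
  calc A * B * A⁻¹ = M * A * A⁻¹ := by rw [hAB]
    _ = M * (A * A⁻¹) := by rw [Matrix.mul_assoc]
    _ = M := by rw [Matrix.mul_nonsing_inv A (isUnit_iff_ne_zero.mpr hdet), Matrix.mul_one]
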